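/- Let P be the cubic Hermite interpolant on [x_i, x_{i+1}] of the data (f_i, ḟ_i), (f_{i+1}, ḟ_{i+1}), suppose m_i ≠ 0, and set α_i = ḟ_i/m_i and β_i = ḟ_{i+1}/m_i. If α_i ≥ 0, β_i ≥ 0, and either α_i + β_i ≤ 3 or α_i² + α_i(β_i − 6) + (β_i − 3)² < 0, then P is monotone on [x_i, x_{i+1}]: nondecreasing if m_i > 0 and nonincreasing if m_i < 0. -/

import Mathlib

/-- Key algebraic fact: under the Fritsch–Carlson conditions the normalized
derivative quadratic `g(s) = 3(a+b-2)s² + (6-4a-2b)s + a` is nonnegative on `[0,1]`. -/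
lemma fc_key (a b s : ℝ) (ha : 0 ≤ a) (hb : 0 ≤ b) (hs0 : 0 ≤ s) (hs1 : s ≤ 1)
    (hcond : a + b ≤ 3 ∨ a ^ 2 + a * (b - 6) + (b - 3) ^ 2 < 0) :
    0 ≤ 3 * (a + b - 2) * s ^ 2 + (6 - 4 * a - 2 * b) * s + a := by
  by_cases h2 : a + b ≤ 2
  · nlinarith [mul_nonneg ha (by linarith : (0:ℝ) ≤ 1 - s), mul_nonneg hb hs0,
      mul_nonneg (mul_nonneg (by linarith : (0:ℝ) ≤ 2 - a - b) hs0)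
        (by linarith : (0:ℝ) ≤ 1 - s)]
  push_neg at h2
  by_cases h3 : 2 * a + b ≤ 3
  · nlinarith [mul_nonneg (mul_nonneg (by linarith : (0:ℝ) ≤ a + b - 2) hs0) hs0,
      mul_nonneg hs0 (by linarith : (0:ℝ) ≤ 3 - 2 * a - b)]
  push_neg at h3
  by_cases h4 : a + 2 * b ≤ 3
  · nlinarith [mul_nonneg (mul_nonneg (by linarith : (0:ℝ) ≤ a + b - 2) hs0)
        (by linarith : (0:ℝ) ≤ 1 - s),
      mul_nonneg (by linarith : (0:ℝ) ≤ 1 - s) (by linarith : (0:ℝ) ≤ 3 - a - 2 * b),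
      mul_nonneg (by linarith : (0:ℝ) ≤ 1 - s) (by linarith : (0:ℝ) ≤ a - (3 - a - b)),
      mul_nonneg (mul_nonneg (by linarith : (0:ℝ) ≤ a + b - 2)
        (by linarith : (0:ℝ) ≤ 1 - s)) (by linarith : (0:ℝ) ≤ 1 - s)]
  push_neg at h4
  have hE : a ^ 2 + a * b + b ^ 2 - 6 * a - 6 * b + 9 ≤ 0 := by
    rcases hcond with hc | hc
    · nlinarith [mul_nonneg (by linarith : (0:ℝ) ≤ a - (3 - a - b))
        (by linarith : (0:ℝ) ≤ b - (3 - a - b)), sq_nonneg (3 - a - b)]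
    · nlinarith
  nlinarith [sq_nonneg (6 * (a + b - 2) * s + (6 - 4 * a - 2 * b)),
    mul_pos (by linarith : (0:ℝ) < a + b - 2) (by linarith : (0:ℝ) < a + b - 2)]

/-- The cubic Hermite interpolant on `[xi, xip]` of the data
`(fi, di)`, `(fip, dip)` (values and derivatives at the endpoints). -/
noncomputable def hermite (xi xip fi fip di dip : ℝ) : ℝ → ℝ := fun t =>
  fi + di * (t - xi)
    + (((fip - fi) / (xip - xi) - di) / (xip - xi)) * (t - xi) ^ 2
    + ((dip + di - 2 * ((fip - fi) / (xip - xi))) / (xip - xi) ^ 2)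
        * (t - xi) ^ 2 * (t - xip)

/-- The derivative of the Hermite cubic at any point. -/
lemma hermite_hasDerivAt (xi xip fi fip di dip : ℝ) (t : ℝ) :
    HasDerivAt (hermite xi xip fi fip di dip)
      (di + 2 * (((fip - fi) / (xip - xi) - di) / (xip - xi)) * (t - xi)
        + ((dip + di - 2 * ((fip - fi) / (xip - xi))) / (xip - xi) ^ 2)
          * (2 * (t - xi) * (t - xip) + (t - xi) ^ 2)) t := by
  have h1 : HasDerivAt (fun u : ℝ => u - xi) 1 t := (hasDerivAt_id t).sub_const xi
  have h2 : HasDerivAt (fun u : ℝ => u - xip) 1 t := (hasDerivAt_id t).sub_const xip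
  have hsq : HasDerivAt (fun u : ℝ => (u - xi) ^ 2) (2 * (t - xi)) t := by
    simpa using h1.fun_pow 2
  have H := (((hasDerivAt_const t fi).add (h1.const_mul di)).add
      (hsq.const_mul (((fip - fi) / (xip - xi) - di) / (xip - xi)))).add
      ((hsq.const_mul ((dip + di - 2 * ((fip - fi) / (xip - xi))) / (xip - xi) ^ 2)).mul h2)
  unfold hermite
  exact H.congr_deriv (by ring)

/-- Fritsch–Carlson sufficient conditions for monotonicity of a cubic Hermite
interpolant: with `α = ḟᵢ/mᵢ ≥ 0`, `β = ḟᵢ₊₁/mᵢ ≥ 0`, if `α + β ≤ 3` or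
`α² + α(β − 6) + (β − 3)² < 0`, the interpolant is monotone on `[xᵢ, xᵢ₊₁]`. -/
theorem hermite_monotone_fritsch_carlson (xi xip fi fip di dip m : ℝ) (hx : xi < xip)
    (hm : m = (fip - fi) / (xip - xi)) (hm0 : m ≠ 0)
    (hα0 : 0 ≤ di / m) (hβ0 : 0 ≤ dip / m)
    (hcond : di / m + dip / m ≤ 3 ∨
      (di / m) ^ 2 + (di / m) * (dip / m - 6) + (dip / m - 3) ^ 2 < 0) :
    (0 < m → MonotoneOn (hermite xi xip fi fip di dip) (Set.Icc xi xip)) ∧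
    (m < 0 → AntitoneOn (hermite xi xip fi fip di dip) (Set.Icc xi xip)) := by
  have hh : (0:ℝ) < xip - xi := by linarith
  have hne : xip - xi ≠ 0 := ne_of_gt hh
  have hfip : fip = fi + m * (xip - xi) := by
    field_simp [hne] at hm; linarith [hm]
  set a := di / m with ha
  set b := dip / m with hb
  have hdi : di = m * a := by rw [ha]; field_simp
  have hdip : dip = m * b := by rw [hb]; field_simp
  have hslope : (fip - fi) / (xip - xi) = m := by
    rw [hfip]; field_simp; ring
  have hderiv : ∀ t : ℝ, deriv (hermite xi xip fi fip di dip) t =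
      m * (3 * (a + b - 2) * ((t - xi) / (xip - xi)) ^ 2
        + (6 - 4 * a - 2 * b) * ((t - xi) / (xip - xi)) + a) := by
    intro t
    rw [(hermite_hasDerivAt xi xip fi fip di dip t).deriv, hslope, hdi, hdip]
    field_simp
    ring
  have hdiff : ∀ t : ℝ, DifferentiableAt ℝ (hermite xi xip fi fip di dip) t :=
    fun t => (hermite_hasDerivAt xi xip fi fip di dip t).differentiableAt
  have hcont : ContinuousOn (hermite xi xip fi fip di dip) (Set.Icc xi xip) :=
    fun t _ => (hdiff t).continuousAt.continuousWithinAt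
  have hdiffOn : DifferentiableOn ℝ (hermite xi xip fi fip di dip)
      (interior (Set.Icc xi xip)) := fun t _ => (hdiff t).differentiableWithinAt
  have hg : ∀ t ∈ interior (Set.Icc xi xip),
      0 ≤ 3 * (a + b - 2) * ((t - xi) / (xip - xi)) ^ 2
        + (6 - 4 * a - 2 * b) * ((t - xi) / (xip - xi)) + a := by
    intro t ht
    rw [interior_Icc] at ht
    refine fc_key a b _ hα0 hβ0 ?_ ?_ hcond
    · exact div_nonneg (by linarith [ht.1]) hh.le
    · rw [div_le_one hh]; linarith [ht.2]
  constructor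
  · intro hmpos
    refine monotoneOn_of_deriv_nonneg (convex_Icc xi xip) hcont hdiffOn ?_
    intro t ht
    rw [hderiv t]
    exact mul_nonneg hmpos.le (hg t ht)
  · intro hmneg
    refine antitoneOn_of_deriv_nonpos (convex_Icc xi xip) hcont hdiffOn ?_
    intro t ht
    rw [hderiv t]
    exact mul_nonpos_of_nonpos_of_nonneg hmneg.le (hg t ht)
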